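/- If a class C of finite graphs is limit winning for splitter, then C is limit topologically nowhere dense, i.e., the countably infinite clique K_ω does not belong to C*∇̃ω. -/

import Mathlib

namespace NWD

open SimpleGraph Filter

/-! ### Shallow minors -/

/-- A `d`-shallow minor model of `H` in `G`: a family of pairwise disjoint branch sets,
each connected of radius at most `d` (witnessed by a center joined to every vertex of the
branch set by a walk of length at most `d` inside the branch set), such that every edge of `H`
is realized by an edge of `G` between the corresponding branch sets. -/
def IsShallowMinorModel {V W : Type} (G : SimpleGraph V) (H : SimpleGraph W) (d : ℕ)
    (α : W → G.Subgraph) : Prop :=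
  (∀ w : W, ∃ c : (α w).verts, ∀ x : (α w).verts, ∃ p : (α w).coe.Walk c x, p.length ≤ d) ∧
  (∀ w w' : W, w ≠ w' → Disjoint (α w).verts (α w').verts) ∧
  (∀ w w' : W, H.Adj w w' → ∃ x ∈ (α w).verts, ∃ y ∈ (α w').verts, G.Adj x y)

/-- `H` is a shallow minor of `G` at depth `d`. -/
def IsShallowMinor {V W : Type} (G : SimpleGraph V) (H : SimpleGraph W) (d : ℕ) : Prop :=
  ∃ α : W → G.Subgraph, IsShallowMinorModel G H d α

/-! ### Topological shallow minors -/

/-- A `d`-shallow topological minor model of `H` in `G`: an injective map `f` on vertices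
together with, for every edge `uv` of `H`, a path of length at most `2d+1` in `G` from `f u`
to `f v`; the paths are pairwise vertex-disjoint apart from possibly sharing endpoints. -/
def IsTopMinorModel {V W : Type} (G : SimpleGraph V) (H : SimpleGraph W) (d : ℕ)
    (f : W → V) (P : ∀ ⦃u v : W⦄, H.Adj u v → G.Walk (f u) (f v)) : Prop :=
  Function.Injective f ∧
  (∀ ⦃u v : W⦄ (h : H.Adj u v), (P h).IsPath) ∧
  (∀ ⦃u v : W⦄ (h : H.Adj u v), (P h).length ≤ 2 * d + 1) ∧
  (∀ ⦃u v : W⦄ (h : H.Adj u v), P h.symm = (P h).reverse) ∧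
  (∀ ⦃u v u' v' : W⦄ (h : H.Adj u v) (h' : H.Adj u' v'), s(u, v) ≠ s(u', v') →
    ∀ x : V, x ∈ (P h).support → x ∈ (P h').support →
      (x = f u ∨ x = f v) ∧ (x = f u' ∨ x = f v'))

/-- `H` is a topological shallow minor of `G` at depth `d`. -/
def IsTopShallowMinor {V W : Type} (G : SimpleGraph V) (H : SimpleGraph W) (d : ℕ) : Prop :=
  ∃ (f : W → V) (P : ∀ ⦃u v : W⦄, H.Adj u v → G.Walk (f u) (f v)),
    IsTopMinorModel G H d f P

/-! ### Ultraproducts of graphs -/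

/-- The setoid identifying sequences agreeing on a set of the ultrafilter. -/
def prodSetoid (U : Ultrafilter ℕ) (Vs : ℕ → Type) : Setoid (∀ n, Vs n) where
  r g h := ∀ᶠ n in (U : Filter ℕ), g n = h n
  iseqv := by
    constructor
    · intro g; exact Eventually.of_forall fun n => rfl
    · intro g h hg; exact hg.mono fun n hn => hn.symm
    · intro g h k h1 h2; filter_upwards [h1, h2] with n e1 e2; rw [e1, e2]

/-- The vertex set of the ultraproduct. -/
def UVertex (U : Ultrafilter ℕ) (Vs : ℕ → Type) : Type := Quotient (prodSetoid U Vs)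

/-- The ultraproduct of a sequence of graphs along the ultrafilter `U`. -/
def UGraph (U : Ultrafilter ℕ) {Vs : ℕ → Type} (Gs : ∀ n, SimpleGraph (Vs n)) :
    SimpleGraph (UVertex U Vs) where
  Adj x y := Quotient.liftOn₂ x y
    (fun g h => ∀ᶠ n in (U : Filter ℕ), (Gs n).Adj (g n) (h n))
    (by
      intro a b a' b' ha hb
      apply propext
      constructor
      · intro hadj; filter_upwards [hadj, ha, hb] with n h1 h2 h3; rw [← h2, ← h3]; exact h1
      · intro hadj; filter_upwards [hadj, ha, hb] with n h1 h2 h3; rw [h2, h3]; exact h1)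
  symm := by
    constructor
    intro x y
    refine Quotient.inductionOn₂ x y ?_
    intro g h hadj
    exact hadj.mono fun n hn => hn.symm
  loopless := by
    constructor
    intro x
    refine Quotient.inductionOn x ?_
    intro g hadj
    obtain ⟨n, hn⟩ := hadj.exists
    exact (Gs n).loopless.irrefl _ hn

/-! ### Graph classes and class limits -/

/-- A class of graphs: a predicate on graphs over arbitrary vertex types. -/
def GraphClass : Type 1 := ∀ V : Type, SimpleGraph V → Prop

/-- `C` is a class of finite graphs. -/
def FiniteClass (C : GraphClass) : Prop :=
  ∀ (V : Type) (G : SimpleGraph V), C V G → Finite V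

/-- `H` is (isomorphic to) a subgraph of `G`. -/
def IsSubgraphOf {W V : Type} (H : SimpleGraph W) (G : SimpleGraph V) : Prop :=
  ∃ f : W → V, Function.Injective f ∧ ∀ ⦃u v : W⦄, H.Adj u v → G.Adj (f u) (f v)

/-- Membership in the class limit `C*`: subgraphs of ultraproducts of sequences from `C`. -/
def InLimit (U : Ultrafilter ℕ) (C : GraphClass) {W : Type} (H : SimpleGraph W) : Prop :=
  ∃ (Vs : ℕ → Type) (Gs : ∀ n, SimpleGraph (Vs n)),
    (∀ n, C (Vs n) (Gs n)) ∧ IsSubgraphOf H (UGraph U Gs)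

/-- `H ∈ C ▽ d`. -/
def InClassMinor (C : GraphClass) (d : ℕ) {W : Type} (H : SimpleGraph W) : Prop :=
  ∃ (V : Type) (G : SimpleGraph V), C V G ∧ IsShallowMinor G H d

/-- `H ∈ C ∇̃ d`. -/
def InClassTopMinor (C : GraphClass) (d : ℕ) {W : Type} (H : SimpleGraph W) : Prop :=
  ∃ (V : Type) (G : SimpleGraph V), C V G ∧ IsTopShallowMinor G H d

/-- `H ∈ C* ▽ d`. -/
def InLimitMinor (U : Ultrafilter ℕ) (C : GraphClass) (d : ℕ) {W : Type}
    (H : SimpleGraph W) : Prop :=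
  ∃ (V : Type) (G : SimpleGraph V), InLimit U C G ∧ IsShallowMinor G H d

/-- `H ∈ C* ∇̃ d`. -/
def InLimitTopMinor (U : Ultrafilter ℕ) (C : GraphClass) (d : ℕ) {W : Type}
    (H : SimpleGraph W) : Prop :=
  ∃ (V : Type) (G : SimpleGraph V), InLimit U C G ∧ IsTopShallowMinor G H d

/-- `C` is somewhere dense: all finite graphs are shallow minors at some fixed depth. -/
def SomewhereDense (C : GraphClass) : Prop :=
  ∃ d : ℕ, ∀ (W : Type) (H : SimpleGraph W), Finite W → InClassMinor C d H

/-- `C` is topologically somewhere dense. -/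
def TopSomewhereDense (C : GraphClass) : Prop :=
  ∃ d : ℕ, ∀ (W : Type) (H : SimpleGraph W), Finite W → InClassTopMinor C d H

/-- The countably infinite clique `K_ω`. -/
def Komega : SimpleGraph ℕ := ⊤

/-- The clique on continuum many vertices `K_𝔠`. -/
def Kcontinuum : SimpleGraph (Set ℕ) := ⊤

/-- `C` is hereditary: closed under induced subgraphs. -/
def Hereditary (C : GraphClass) : Prop :=
  ∀ (V : Type) (G : SimpleGraph V), C V G →
    ∀ (W : Type) (f : W → V), Function.Injective f → C W (G.comap f)

/-! ### Scattered sets and quasi-wideness -/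

/-- `X` is a `d`-scattered set of `G - S`: it avoids `S`, and any two distinct vertices of `X`
are at distance greater than `2d` in `G - S` (every connecting walk avoiding `S` is longer
than `2d`). -/
def ScatteredIn {V : Type} (G : SimpleGraph V) (d : ℕ) (S X : Set V) : Prop :=
  Disjoint X S ∧ ∀ u ∈ X, ∀ v ∈ X, u ≠ v →
    ∀ p : G.Walk u v, (∀ x ∈ p.support, x ∉ S) → 2 * d < p.length

/-- `C` is quasi-wide with margin `s`. -/
def QuasiWide (C : GraphClass) (s : ℕ → ℕ) : Prop :=
  ∀ d m : ℕ, ∃ N : ℕ, ∀ (V : Type) (G : SimpleGraph V), C V G → N ≤ Nat.card V →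
    ∃ S X : Set V, S.Finite ∧ S.ncard ≤ s d ∧ X.Finite ∧ X.ncard = m ∧ ScatteredIn G d S X

/-- `C` is uniformly quasi-wide with margin `s`. -/
def UniformlyQuasiWide (C : GraphClass) (s : ℕ → ℕ) : Prop :=
  ∀ d m : ℕ, ∃ N : ℕ, ∀ (V : Type) (G : SimpleGraph V), C V G →
    ∀ W : Set V, N ≤ W.ncard →
      ∃ S X : Set V, S.Finite ∧ S.ncard ≤ s d ∧ X ⊆ W ∧ X.Finite ∧ X.ncard = m ∧
        ScatteredIn G d S X

/-- `C` is limit quasi-wide. -/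
def LimitQW (U : Ultrafilter ℕ) (C : GraphClass) : Prop :=
  ∀ (d : ℕ) (V : Type) (G : SimpleGraph V), InLimit U C G → Infinite V →
    ∃ S X : Set V, S.Finite ∧ X.Infinite ∧ ScatteredIn G d S X

/-- `C` is uniformly limit quasi-wide. -/
def UniformLimitQW (U : Ultrafilter ℕ) (C : GraphClass) : Prop :=
  ∀ (d : ℕ) (V : Type) (G : SimpleGraph V), InLimit U C G →
    ∀ W : Set V, W.Infinite →
      ∃ S X : Set V, S.Finite ∧ X ⊆ W ∧ X.Infinite ∧ ScatteredIn G d S X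

/-- `C` is strongly limit quasi-wide with margin `s`. -/
def StrongLimitQW (U : Ultrafilter ℕ) (C : GraphClass) (s : ℕ → ℕ) : Prop :=
  ∀ (d : ℕ) (V : Type) (G : SimpleGraph V), InLimit U C G → Infinite V →
    ∃ S X : Set V, S.Finite ∧ S.ncard ≤ s d ∧ X.Infinite ∧ ScatteredIn G d S X

/-- `C` is strongly uniformly limit quasi-wide with margin `s`. -/
def StrongUniformLimitQW (U : Ultrafilter ℕ) (C : GraphClass) (s : ℕ → ℕ) : Prop :=
  ∀ (d : ℕ) (V : Type) (G : SimpleGraph V), InLimit U C G →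
    ∀ W : Set V, W.Infinite →
      ∃ S X : Set V, S.Finite ∧ S.ncard ≤ s d ∧ X ⊆ W ∧ X.Infinite ∧ ScatteredIn G d S X

/-! ### The splitter game -/

/-- One round of the splitter game: from arena `A`, connector picks `v`, splitter picks `W`;
the new arena consists of the vertices of `A` outside `W` at distance at most `d` from `v`
in the subgraph induced by `A`. -/
def arenaStep {V : Type} (G : SimpleGraph V) (d : ℕ) (A : Set V) (v : V) (W : Set V) : Set V :=
  {x | x ∈ A ∧ x ∉ W ∧ ∃ p : G.Walk v x, p.length ≤ d ∧ ∀ y ∈ p.support, y ∈ A}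

/-- The arena after a (chronological) history of moves. -/
def arenaAfter {V : Type} (G : SimpleGraph V) (d : ℕ) (hist : List (V × Set V)) : Set V :=
  hist.foldl (fun A mv => arenaStep G d A mv.1 mv.2) Set.univ

/-- A strategy for splitter: given the history and connector's new move, produce a set. -/
def SplitterStrategy (V : Type) : Type := List (V × Set V) → V → Set V

/-- The history of the play where connector plays `c` and splitter follows `σ`. -/
def splitterHist {V : Type} (σ : SplitterStrategy V) (c : ℕ → V) : ℕ → List (V × Set V)
  | 0 => []
  | n + 1 => splitterHist σ c n ++ [(c n, σ (splitterHist σ c n) (c n))]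

/-- Connector's first `n` moves are valid (inside the successive arenas). -/
def ConsistentPlay {V : Type} (G : SimpleGraph V) (d : ℕ) (σ : SplitterStrategy V)
    (c : ℕ → V) (n : ℕ) : Prop :=
  ∀ k < n, c k ∈ arenaAfter G d (splitterHist σ c k)

/-- `σ` is a winning strategy for splitter in the limit `d`-splitter game on `G`:
its moves are valid (finite subsets of the arena) along any consistent play, and no
infinite sequence of valid connector moves exists. -/
def SplitterWinsLimit {V : Type} (G : SimpleGraph V) (d : ℕ) (σ : SplitterStrategy V) : Prop :=
  (∀ (c : ℕ → V) (n : ℕ), ConsistentPlay G d σ c (n + 1) →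
      (σ (splitterHist σ c n) (c n)).Finite ∧
      σ (splitterHist σ c n) (c n) ⊆ arenaAfter G d (splitterHist σ c n)) ∧
  (∀ c : ℕ → V, ∃ n : ℕ, c n ∉ arenaAfter G d (splitterHist σ c n))

/-- `σ` is a winning strategy for splitter in the `(ℓ, m, d)`-splitter game on `G`. -/
def SplitterWinsGame {V : Type} (G : SimpleGraph V) (l m d : ℕ) (σ : SplitterStrategy V) :
    Prop :=
  (∀ (c : ℕ → V) (n : ℕ), ConsistentPlay G d σ c (n + 1) →
      (σ (splitterHist σ c n) (c n)).Finite ∧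
      (σ (splitterHist σ c n) (c n)).ncard ≤ m ∧
      σ (splitterHist σ c n) (c n) ⊆ arenaAfter G d (splitterHist σ c n)) ∧
  (∀ c : ℕ → V, ∃ n ≤ l, c n ∉ arenaAfter G d (splitterHist σ c n))

/-- A strategy for connector: given the history, produce a vertex. -/
def ConnectorStrategy (V : Type) : Type := List (V × Set V) → V

/-- The history of the play where connector follows `τ` and splitter plays `w`. -/
def connectorHist {V : Type} (τ : ConnectorStrategy V) (w : ℕ → Set V) :
    ℕ → List (V × Set V)
  | 0 => []
  | n + 1 => connectorHist τ w n ++ [(τ (connectorHist τ w n), w n)]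

/-- `τ` is a winning strategy for connector in the limit `d`-splitter game on `G`:
as long as splitter's moves are valid, connector's moves stay in the arena forever. -/
def ConnectorWinsLimit {V : Type} (G : SimpleGraph V) (d : ℕ) (τ : ConnectorStrategy V) :
    Prop :=
  ∀ (w : ℕ → Set V) (n : ℕ),
    (∀ k < n, (w k).Finite ∧ w k ⊆ arenaAfter G d (connectorHist τ w k)) →
    τ (connectorHist τ w n) ∈ arenaAfter G d (connectorHist τ w n)

/-- `τ` is a winning strategy for connector in the `(ℓ, m, d)`-splitter game on `G`:
the arena stays nonempty for `ℓ` rounds, i.e. connector has valid moves at rounds `0,…,ℓ`. -/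
def ConnectorWinsGame {V : Type} (G : SimpleGraph V) (l m d : ℕ) (τ : ConnectorStrategy V) :
    Prop :=
  ∀ (w : ℕ → Set V) (n : ℕ), n ≤ l →
    (∀ k < n, (w k).Finite ∧ (w k).ncard ≤ m ∧
      w k ⊆ arenaAfter G d (connectorHist τ w k)) →
    τ (connectorHist τ w n) ∈ arenaAfter G d (connectorHist τ w n)

/-- `C` is winning for splitter. -/
def WinningForSplitter (C : GraphClass) : Prop :=
  ∀ d : ℕ, ∃ l m : ℕ, ∀ (V : Type) (G : SimpleGraph V), C V G →
    ∃ σ : SplitterStrategy V, SplitterWinsGame G l m d σ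

/-- `C` is limit winning for splitter. -/
def LimitWinningForSplitter (U : Ultrafilter ℕ) (C : GraphClass) : Prop :=
  ∀ (d : ℕ) (V : Type) (G : SimpleGraph V), InLimit U C G →
    ∃ σ : SplitterStrategy V, SplitterWinsLimit G d σ

/-! ### First-order satisfaction in graphs -/

/-- `G` satisfies the first-order sentence `φ` in the language of graphs. -/
def GSat {V : Type} (G : SimpleGraph V) (φ : FirstOrder.Language.graph.Sentence) : Prop :=
  @FirstOrder.Language.Sentence.Realize FirstOrder.Language.graph V G.structure φ


section GmTnd

variable {V : Type}

/-- The run of the game against splitter strategy `σ`, where connector plays branch vertices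
of a `K_ω` topological minor model, carrying along the surviving set of indices. -/
noncomputable def runGame (G : SimpleGraph V) (σ : SplitterStrategy V) (f : ℕ → V)
    (P : ∀ ⦃u v : ℕ⦄, Komega.Adj u v → G.Walk (f u) (f v)) :
    ℕ → List (V × Set V) × Set ℕ
  | 0 => ([], Set.univ)
  | n + 1 =>
    ((runGame G σ f P n).1 ++
        [(f (sInf (runGame G σ f P n).2),
          σ (runGame G σ f P n).1 (f (sInf (runGame G σ f P n).2)))],
      {j ∈ (runGame G σ f P n).2 |
        f j ∉ σ (runGame G σ f P n).1 (f (sInf (runGame G σ f P n).2)) ∧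
        ∀ w ∈ σ (runGame G σ f P n).1 (f (sInf (runGame G σ f P n).2)),
          w ∉ Set.range f → ∀ k : ℕ, ∀ h : Komega.Adj j k, w ∉ (P h).support})

lemma arenaAfter_append (G : SimpleGraph V) (d : ℕ) (hist : List (V × Set V))
    (v : V) (W : Set V) :
    arenaAfter G d (hist ++ [(v, W)]) = arenaStep G d (arenaAfter G d hist) v W := by
  simp [arenaAfter, List.foldl_append]

lemma key_lemma (G : SimpleGraph V) (d : ℕ) (f : ℕ → V)
    (P : ∀ ⦃u v : ℕ⦄, Komega.Adj u v → G.Walk (f u) (f v))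
    (hmodel : IsTopMinorModel G Komega d f P)
    (σ : SplitterStrategy V) (hσ : SplitterWinsLimit G (2 * (2 * d + 1)) σ) : False := by
  classical
  obtain ⟨hinj, hpath, hlen, hsym, hdisj⟩ := hmodel
  set D := 2 * (2 * d + 1) with hD
  -- notation
  set Idx : ℕ → Set ℕ := fun n => (runGame G σ f P n).2 with hIdx
  set hist : ℕ → List (V × Set V) := fun n => (runGame G σ f P n).1 with hhist
  set c : ℕ → V := fun n => f (sInf (Idx n)) with hc
  -- endpoints on paths
  have endpt : ∀ (a j k : ℕ) (h : Komega.Adj j k), f a ∈ (P h).support → a = j ∨ a = k := by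
    intro a j k h hmem
    by_contra hcon
    push_neg at hcon
    obtain ⟨haj, hak⟩ := hcon
    have hadj : Komega.Adj a (a + 1) := by
      simp [Komega]
    have hne : s(a, a + 1) ≠ s(j, k) := by
      intro he
      rw [Sym2.eq_iff] at he
      rcases he with ⟨h1, _⟩ | ⟨h1, _⟩
      · exact haj h1
      · exact hak h1
    have := (hdisj hadj h hne (f a) ((P hadj).start_mem_support) hmem).2
    rcases this with h1 | h1
    · exact haj (hinj h1)
    · exact hak (hinj h1)
  -- uniqueness of pairs through an internal vertex
  have upair : ∀ w : V, w ∉ Set.range f → ∀ (j k j' k' : ℕ)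
      (h : Komega.Adj j k) (h' : Komega.Adj j' k'),
      w ∈ (P h).support → w ∈ (P h').support → s(j, k) = s(j', k') := by
    intro w hw j k j' k' h h' hm hm'
    by_contra hne
    rcases (hdisj h h' hne w hm hm').1 with h1 | h1 <;> exact hw ⟨_, h1.symm⟩
  -- splitterHist agrees with our run
  have histEq : ∀ n, splitterHist σ c n = hist n := by
    intro n
    induction n with
    | zero => rfl
    | succ n ih =>
      show splitterHist σ c n ++ _ = (runGame G σ f P (n + 1)).1
      rw [ih]
      rfl
  -- the invariant
  set Good : ℕ → Prop := fun n => (Idx n).Infinite ∧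
    ∀ j ∈ Idx n, ∀ k ∈ Idx n, ∀ h : Komega.Adj j k, ∀ x ∈ (P h).support,
      x ∈ arenaAfter G D (hist n) with hGood
  have cmem : ∀ n, Good n → c n ∈ arenaAfter G D (hist n) := by
    intro n hg
    obtain ⟨hInf, hinv⟩ := hg
    have hi0 : sInf (Idx n) ∈ Idx n := Nat.sInf_mem hInf.nonempty
    obtain ⟨k, hk⟩ := (hInf.diff (Set.finite_singleton (sInf (Idx n)))).nonempty
    have hkI : k ∈ Idx n := hk.1
    have hkne : Komega.Adj (sInf (Idx n)) k := fun he => hk.2 (by simp [he])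
    exact hinv _ hi0 _ hkI hkne _ ((P hkne).start_mem_support)
  -- main induction
  have main : ∀ n, Good n := by
    intro n
    induction n using Nat.strong_induction_on with
    | _ n ih =>
      match n with
      | 0 =>
        constructor
        · exact Set.infinite_univ
        · intro j _ k _ h x _
          show x ∈ arenaAfter G D []
          simp [arenaAfter]
      | Nat.succ m =>
        have ihm : Good m := ih m (Nat.lt_succ_self m)
        obtain ⟨hInf, hinv⟩ := ihm
        set i₀ : ℕ := sInf (Idx m) with hi₀
        have hi0m : i₀ ∈ Idx m := Nat.sInf_mem hInf.nonempty
        set W : Set V := σ (hist m) (f i₀) with hW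
        -- splitter's move is finite, by validity along the consistent play
        have hcons : ConsistentPlay G D σ c (m + 1) := by
          intro k hk
          rw [histEq]
          exact cmem k (ih k (by omega))
        have hWfin : W.Finite := by
          have := (hσ.1 c m hcons).1
          rwa [histEq m] at this
        -- structure of the new index set
        have hIdxSucc : Idx (m + 1) = {j ∈ Idx m | f j ∉ W ∧
            ∀ w ∈ W, w ∉ Set.range f → ∀ k : ℕ, ∀ h : Komega.Adj j k,
              w ∉ (P h).support} := rfl
        have hhistSucc : hist (m + 1) = hist m ++ [(f i₀, W)] := rfl
        have hsub : Idx (m + 1) ⊆ Idx m := fun j hj => hj.1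
        constructor
        -- infiniteness
        · set B1 : Set ℕ := f ⁻¹' W with hB1
          set B2 : Set ℕ := ⋃ w ∈ W \ Set.range f,
            {j : ℕ | ∃ k : ℕ, ∃ h : Komega.Adj j k, w ∈ (P h).support} with hB2
          have hB1fin : B1.Finite := hWfin.preimage hinj.injOn
          have hB2fin : B2.Finite := by
            refine Set.Finite.biUnion hWfin.diff ?_
            intro w hw
            rcases Set.eq_empty_or_nonempty
                {j : ℕ | ∃ k : ℕ, ∃ h : Komega.Adj j k, w ∈ (P h).support} with he | hne
            · rw [he]; exact Set.finite_empty
            · obtain ⟨j₀, k₀, h₀, hm₀⟩ := hne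
              refine ((Set.finite_singleton k₀).insert j₀).subset ?_
              rintro j ⟨k, h, hm'⟩
              have := upair w hw.2 j k j₀ k₀ h h₀ hm' hm₀
              rw [Sym2.eq_iff] at this
              rcases this with ⟨h1, _⟩ | ⟨h1, _⟩
              · exact Or.inl h1
              · exact Or.inr h1
          have hsub2 : Idx m \ (B1 ∪ B2) ⊆ Idx (m + 1) := by
            intro j hj
            rw [hIdxSucc]
            refine ⟨hj.1, ?_, ?_⟩
            · intro hfj
              exact hj.2 (Or.inl hfj)
            · intro w hw hwr k h hws
              exact hj.2 (Or.inr (Set.mem_biUnion ⟨hw, hwr⟩ ⟨k, h, hws⟩))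
          exact ((hInf.diff (hB1fin.union hB2fin)).mono hsub2)
        -- the path invariant
        · intro j hj k hk h x hx
          rw [hhistSucc, arenaAfter_append]
          have hjm := hsub hj
          have hkm := hsub hk
          have hxA : x ∈ arenaAfter G D (hist m) := hinv j hjm k hkm h x hx
          refine ⟨hxA, ?_, ?_⟩
          -- x ∉ W
          · intro hxW
            by_cases hxr : x ∈ Set.range f
            · obtain ⟨a, rfl⟩ := hxr
              rcases endpt a j k h hx with rfl | rfl
              · exact hj.2.1 hxW
              · exact hk.2.1 hxW
            · exact hj.2.2 x hxW hxr k h hx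
          -- a short walk from the connector's vertex
          · by_cases hij : i₀ = j
            · subst hij
              refine ⟨(P h).takeUntil x hx, ?_, ?_⟩
              · have := ((P h).length_takeUntil_le hx).trans (hlen h)
                omega
              · intro y hy
                exact hinv i₀ hi0m k hkm h y ((P h).support_takeUntil_subset hx hy)
            · have hadj : Komega.Adj i₀ j := hij
              refine ⟨(P hadj).append ((P h).takeUntil x hx), ?_, ?_⟩
              · rw [SimpleGraph.Walk.length_append]
                have h1 := hlen hadj
                have h2 := ((P h).length_takeUntil_le hx).trans (hlen h)
                omega
              · intro y hy
                rw [SimpleGraph.Walk.mem_support_append_iff] at hy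
                rcases hy with hy | hy
                · exact hinv i₀ hi0m j hjm hadj y hy
                · exact hinv j hjm k hkm h y ((P h).support_takeUntil_subset hx hy)
  obtain ⟨n, hn⟩ := hσ.2 c
  rw [histEq n] at hn
  exact hn (cmem n (main n))

end GmTnd

/-- If `C` is limit winning for splitter, then `C` is limit topologically
nowhere dense: `K_ω ∉ C* ∇̃ ω`. -/
theorem gm_tnd (U : Ultrafilter ℕ) (hU : ∀ a : ℕ, {a} ∉ U)
    (C : GraphClass) (hfin : FiniteClass C) (hwin : LimitWinningForSplitter U C) :
    ¬ ∃ d : ℕ, InLimitTopMinor U C d Komega := by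
  rintro ⟨d, V, G, hGlim, f, P, hmodel⟩
  obtain ⟨σ, hσ⟩ := hwin (2 * (2 * d + 1)) V G hGlim
  exact key_lemma G d f P hmodel σ hσ

end NWD
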